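/- Let b₃, b₄, c₁, c₂ be integers and let n ≥ 2 be an even natural number. With b₃', b₄', c₁', c₂' as defined, one has c₁'·(b₄' − 1) − c₂'·b₃' = 0 if and only if either c₁·(b₄ − 1) − c₂·b₃ = 0 or b₄ = −1. -/

import Mathlib

lemma tele_sum (x : ℤ) (m : ℕ) :
    (∑ i ∈ Finset.range m, ((m : ℤ) - i) * x ^ i) * (x - 1)
      = (∑ i ∈ Finset.range (m + 1), x ^ i) - (m + 1) := by
  induction m with
  | zero => simp
  | succ m ih =>
    have hsplit : (∑ i ∈ Finset.range (m + 1), (((m : ℕ) + 1 : ℤ) - i) * x ^ i)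
        = (∑ i ∈ Finset.range m, ((m : ℤ) - i) * x ^ i)
          + ∑ i ∈ Finset.range (m + 1), x ^ i := by
      have h1 : (∑ i ∈ Finset.range (m + 1), (((m : ℕ) + 1 : ℤ) - i) * x ^ i)
          = ∑ i ∈ Finset.range (m + 1), (((m : ℤ) - i) * x ^ i + x ^ i) := by
        apply Finset.sum_congr rfl; intros; ring
      rw [h1, Finset.sum_add_distrib,
        Finset.sum_range_succ (fun i => ((m : ℤ) - i) * x ^ i)]
      simp
    push_cast [hsplit]
    have hg : (∑ i ∈ Finset.range (m + 1), x ^ i) * (x - 1) = x ^ (m + 1) - 1 :=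
      geom_sum_mul x (m + 1)
    rw [Finset.sum_range_succ (fun i => x ^ i) (m + 1)]
    push_cast at ih ⊢
    linear_combination ih + hg

theorem iterate_coeff_vanish_iff_even (b₃ b₄ c₁ c₂ : ℤ) (n : ℕ) (hn : 2 ≤ n) (heven : Even n)
    (b₃' b₄' c₁' c₂' : ℤ)
    (hb₃' : b₃' = b₃ * ∑ i ∈ Finset.range n, b₄ ^ i)
    (hb₄' : b₄' = b₄ ^ n)
    (hc₁' : c₁' = (n : ℤ) * c₁ + b₃ * c₂ * ∑ i ∈ Finset.range (n - 1), ((n : ℤ) - 1 - (i : ℤ)) * b₄ ^ i)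
    (hc₂' : c₂' = c₂ * ∑ i ∈ Finset.range n, b₄ ^ i) :
    c₁' * (b₄' - 1) - c₂' * b₃' = 0 ↔ (c₁ * (b₄ - 1) - c₂ * b₃ = 0 ∨ b₄ = -1) := by
  set S : ℤ := ∑ i ∈ Finset.range n, b₄ ^ i with hS
  obtain ⟨m, hm⟩ : ∃ m, n = m + 1 := ⟨n - 1, (Nat.succ_pred_eq_of_pos (by omega)).symm⟩
  have hT : (∑ i ∈ Finset.range (n - 1), ((n : ℤ) - 1 - (i : ℤ)) * b₄ ^ i) * (b₄ - 1)
      = S - n := by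
    subst hm
    have := tele_sum b₄ m
    simp only [Nat.add_sub_cancel]
    push_cast
    simp only [add_sub_cancel_right]
    linear_combination this
  have hgeom : S * (b₄ - 1) = b₄ ^ n - 1 := geom_sum_mul b₄ n
  have key : c₁' * (b₄' - 1) - c₂' * b₃' = (n : ℤ) * S * (c₁ * (b₄ - 1) - c₂ * b₃) := by
    rw [hb₃', hb₄', hc₁', hc₂']
    linear_combination (-((n:ℤ) * c₁ + b₃ * c₂ * (∑ i ∈ Finset.range (n - 1), ((n : ℤ) - 1 - (i : ℤ)) * b₄ ^ i))) * hgeom + b₃ * c₂ * S * hT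
  have hSiff : S = 0 ↔ b₄ = -1 := by
    constructor
    · intro h0
      have hb : b₄ ^ n = 1 := by linarith [hgeom, h0.symm ▸ (by ring : (0:ℤ) * (b₄ - 1) = 0)]
      have habs : b₄.natAbs = 1 := by
        have : b₄.natAbs ^ n = 1 := by
          have := congrArg Int.natAbs hb
          rwa [Int.natAbs_pow] at this
        exact (pow_eq_one_iff.mp this).resolve_right (by omega)
      rcases Int.natAbs_eq_iff.mp habs with h1 | h1
      · exfalso
        rw [hS, h1] at h0
        simp at h0
        omega
      · simpa using h1
    · intro h1
      rw [hS, h1, neg_one_geom_sum, if_pos heven]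
  rw [key]
  have hn0 : (n : ℤ) ≠ 0 := by exact_mod_cast (by omega : n ≠ 0)
  constructor
  · intro h
    rcases mul_eq_zero.mp h with h' | h'
    · rcases mul_eq_zero.mp h' with h'' | h''
      · exact absurd h'' hn0
      · exact Or.inr (hSiff.mp h'')
    · exact Or.inl h'
  · rintro (h | h)
    · rw [h, mul_zero]
    · rw [hSiff.mpr h]; ring
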